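/- Let k be an algebraically closed field, n ≥ 6, and let 𝒯 be a collection of 6-element subsets of [n]. Then the following are equivalent: (i) for every tuple of nonzero vectors v₁, …, v_n ∈ k³, the conditions φ_H(v₁,…,v_n) = 0 for all H ∈ 𝒯 hold if and only if v₁, …, v_n lie on a conic; (ii) 𝒯 satisfies the transversality property. -/

import Mathlib

/-- The Veronese image of a vector `v = (v₀, v₁, v₂) ∈ k³`:
`ver v = (v₀², v₁², v₂², v₀v₁, v₀v₂, v₁v₂) ∈ k⁶`. -/
def ver {k : Type*} [CommRing k] (v : Fin 3 → k) : Fin 6 → k :=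
  ![v 0 * v 0, v 1 * v 1, v 2 * v 2, v 0 * v 1, v 0 * v 2, v 1 * v 2]

/-- A collection `𝒯` of subsets of `[n]` satisfies the transversality property (for
`k`-uniform hypergraphs) if for every partition of `[n]` into `k` nonempty parts
(encoded as a surjection `P : Fin n → Fin k`, the parts being the fibers), there is
an `H ∈ 𝒯` meeting every part in exactly one element. -/
def Transversal (n k : ℕ) (𝒯 : Set (Finset (Fin n))) : Prop :=
  ∀ P : Fin n → Fin k, Function.Surjective P →
    ∃ H ∈ 𝒯, ∀ j : Fin k, (H.filter fun i => P i = j).card = 1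

namespace ConicAux

@[simp] lemma cons_val_5 {α : Type*} (a : α) (u : Fin 5 → α) : Matrix.vecCons a u 5 = u 4 := rfl
@[simp] lemma cons_val_4' {α : Type*} (a : α) (u : Fin 4 → α) : Matrix.vecCons a u 4 = u 3 := rfl
@[simp] lemma cons_val_3' {α : Type*} (a : α) (u : Fin 3 → α) : Matrix.vecCons a u 3 = u 2 := rfl
@[simp] lemma cons_val_2' {α : Type*} (a : α) (u : Fin 2 → α) : Matrix.vecCons a u 2 = u 1 := rfl
@[simp] lemma cons_val_1' {α : Type*} (a : α) (u : Fin 1 → α) : Matrix.vecCons a u 1 = u 0 := rfl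

variable {k : Type*} [Field k]

/-- dot product on `k³` -/
def lin (l v : Fin 3 → k) : k := l 0 * v 0 + l 1 * v 1 + l 2 * v 2

/-- cross product on `k³` -/
def cross (a b : Fin 3 → k) : Fin 3 → k :=
  ![a 1 * b 2 - a 2 * b 1, a 2 * b 0 - a 0 * b 2, a 0 * b 1 - a 1 * b 0]

/-- 3×3 determinant as scalar triple product -/
def det3 (a b c : Fin 3 → k) : k := lin (cross a b) c

/-- evaluation of a conic (coefficient vector in `k⁶`) at a point of `k³` -/
def ev (c : Fin 6 → k) (v : Fin 3 → k) : k := ∑ j, c j * ver v j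

/-- the quadratic form which is the product of two linear forms -/
def mulForm (l m : Fin 3 → k) : Fin 6 → k :=
  ![l 0 * m 0, l 1 * m 1, l 2 * m 2, l 0 * m 1 + l 1 * m 0,
    l 0 * m 2 + l 2 * m 0, l 1 * m 2 + l 2 * m 1]

lemma ev_mulForm (l m v : Fin 3 → k) : ev (mulForm l m) v = lin l v * lin m v := by
  simp [ev, mulForm, lin, ver, Fin.sum_univ_six]; ring

lemma ev_smul_pt (c : Fin 6 → k) (μ : k) (v : Fin 3 → k) : ev c (μ • v) = μ^2 * ev c v := by
  simp [ev, ver, Fin.sum_univ_six]; ring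

lemma ev_add_left (c d : Fin 6 → k) (v : Fin 3 → k) : ev (c + d) v = ev c v + ev d v := by
  simp [ev, Fin.sum_univ_six]; ring

lemma ev_smul_left (α : k) (c : Fin 6 → k) (v : Fin 3 → k) : ev (α • c) v = α * ev c v := by
  simp [ev, Fin.sum_univ_six]; ring

lemma det3_self_left (a b : Fin 3 → k) : det3 a b a = 0 := by
  simp [det3, lin, cross]; ring

lemma det3_self_right (a b : Fin 3 → k) : det3 a b b = 0 := by
  simp [det3, lin, cross]; ring

lemma lin_cross_self (a b : Fin 3 → k) : lin a (cross a b) = 0 := by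
  simp [lin, cross]; ring

lemma lin_cross_self' (a b : Fin 3 → k) : lin b (cross a b) = 0 := by
  simp [lin, cross]; ring

lemma lin_add_smul (l : Fin 3 → k) (α β : k) (x y : Fin 3 → k) :
    lin l (α • x + β • y) = α * lin l x + β * lin l y := by
  simp [lin]; ring

lemma det3_smul_mid (a b c : Fin 3 → k) (μ : k) : det3 a (μ • b) c = μ * det3 a b c := by
  simp [det3, lin, cross]; ring

lemma det3_smul_right (a b c : Fin 3 → k) (μ : k) : det3 a b (μ • c) = μ * det3 a b c := by
  simp [det3, lin, cross]; ring

lemma det3_smul_left (a b c : Fin 3 → k) (μ : k) : det3 (μ • a) b c = μ * det3 a b c := by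
  simp [det3, lin, cross]; ring

lemma det3_cyc (a b c : Fin 3 → k) : det3 a b c = det3 c a b := by
  simp [det3, lin, cross]; ring

lemma ne_zero_coord {m : ℕ} {a : Fin m → k} (ha : a ≠ 0) : ∃ i, a i ≠ 0 := by
  by_contra h
  push_neg at h
  exact ha (funext fun i => h i)

/-- a nonzero vector has some nonzero coordinate (3 coords) -/
lemma coord3 {a : Fin 3 → k} (ha : a ≠ 0) : a 0 ≠ 0 ∨ a 1 ≠ 0 ∨ a 2 ≠ 0 := by
  by_contra h
  push_neg at h
  exact ha (funext fun j => by fin_cases j <;> simp [h.1, h.2.1, h.2.2])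

/-- if `a ≠ 0` and `a × b = 0` then `b` is a multiple of `a` -/
lemma prop_of_cross_eq_zero {a b : Fin 3 → k} (ha : a ≠ 0) (h : cross a b = 0) :
    ∃ μ : k, b = μ • a := by
  have h0 := congrFun h 0
  have h1 := congrFun h 1
  have h2 := congrFun h 2
  simp [cross] at h0 h1 h2
  rcases coord3 ha with hi | hi | hi
  · refine ⟨b 0 / a 0, funext fun j => ?_⟩
    fin_cases j <;> simp [smul_eq_mul] <;> field_simp <;>
      first
        | linear_combination h0 | linear_combination -h0
        | linear_combination h1 | linear_combination -h1
        | linear_combination h2 | linear_combination -h2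
  · refine ⟨b 1 / a 1, funext fun j => ?_⟩
    fin_cases j <;> simp [smul_eq_mul] <;> field_simp <;>
      first
        | linear_combination h0 | linear_combination -h0
        | linear_combination h1 | linear_combination -h1
        | linear_combination h2 | linear_combination -h2
  · refine ⟨b 2 / a 2, funext fun j => ?_⟩
    fin_cases j <;> simp [smul_eq_mul] <;> field_simp <;>
      first
        | linear_combination h0 | linear_combination -h0
        | linear_combination h1 | linear_combination -h1
        | linear_combination h2 | linear_combination -h2

/-- the product of two nonzero linear forms is a nonzero quadratic form -/
lemma mulForm_ne_zero {l m : Fin 3 → k} (hl : l ≠ 0) (hm : m ≠ 0) : mulForm l m ≠ 0 := by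
  intro h
  have e0 := congrFun h 0
  have e1 := congrFun h 1
  have e2 := congrFun h 2
  have e3 := congrFun h 3
  have e4 := congrFun h 4
  have e5 := congrFun h 5
  simp [mulForm] at e0 e1 e2 e3 e4 e5
  apply hm
  rcases coord3 hl with hi | hi | hi
  · have m0 : m 0 = 0 := by rcases e0 with h' | h' <;> tauto
    have m1 : m 1 = 0 := by
      have : l 0 * m 1 = 0 := by rw [m0] at e3; linear_combination e3
      rcases mul_eq_zero.1 this with h' | h' <;> tauto
    have m2 : m 2 = 0 := by
      have : l 0 * m 2 = 0 := by rw [m0] at e4; linear_combination e4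
      rcases mul_eq_zero.1 this with h' | h' <;> tauto
    exact funext fun j => by fin_cases j <;> simpa
  · have m1 : m 1 = 0 := by rcases e1 with h' | h' <;> tauto
    have m0 : m 0 = 0 := by
      have : l 1 * m 0 = 0 := by rw [m1] at e3; linear_combination e3
      rcases mul_eq_zero.1 this with h' | h' <;> tauto
    have m2 : m 2 = 0 := by
      have : l 1 * m 2 = 0 := by rw [m1] at e5; linear_combination e5
      rcases mul_eq_zero.1 this with h' | h' <;> tauto
    exact funext fun j => by fin_cases j <;> simpa
  · have m2 : m 2 = 0 := by rcases e2 with h' | h' <;> tauto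
    have m0 : m 0 = 0 := by
      have : l 2 * m 0 = 0 := by rw [m2] at e4; linear_combination e4
      rcases mul_eq_zero.1 this with h' | h' <;> tauto
    have m1 : m 1 = 0 := by
      have : l 2 * m 1 = 0 := by rw [m2] at e5; linear_combination e5
      rcases mul_eq_zero.1 this with h' | h' <;> tauto
    exact funext fun j => by fin_cases j <;> simpa

/-- if `z, r` are independent and `det3 z r p = 0` then `p ∈ span {z, r}` -/
lemma mem_span2 {z r p : Fin 3 → k} (hzr : cross z r ≠ 0) (hp : det3 z r p = 0) :
    ∃ α β : k, p = α • z + β • r := by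
  have hp' : (z 1 * r 2 - z 2 * r 1) * p 0 + (z 2 * r 0 - z 0 * r 2) * p 1
      + (z 0 * r 1 - z 1 * r 0) * p 2 = 0 := by
    simp [det3, lin, cross] at hp; linear_combination hp
  have hco : z 1 * r 2 - z 2 * r 1 ≠ 0 ∨ z 2 * r 0 - z 0 * r 2 ≠ 0 ∨
      z 0 * r 1 - z 1 * r 0 ≠ 0 := by
    have := coord3 hzr
    simpa [cross] using this
  rcases hco with hi | hi | hi
  · refine ⟨(p 1 * r 2 - p 2 * r 1) / (z 1 * r 2 - z 2 * r 1),
      (z 1 * p 2 - z 2 * p 1) / (z 1 * r 2 - z 2 * r 1), funext fun j => ?_⟩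
    fin_cases j <;> simp only [Fin.zero_eta, Fin.mk_one, Fin.reduceFinMk, Fin.isValue, Pi.add_apply, Pi.smul_apply, smul_eq_mul] <;>
      rw [div_mul_eq_mul_div, div_mul_eq_mul_div, ← add_div, eq_div_iff hi] <;>
      first
        | ring1
        | linear_combination hp' | linear_combination -hp'
        | linear_combination p 0 * hp' | linear_combination (-(p 0)) * hp'
  · refine ⟨(p 2 * r 0 - p 0 * r 2) / (z 2 * r 0 - z 0 * r 2),
      (z 2 * p 0 - z 0 * p 2) / (z 2 * r 0 - z 0 * r 2), funext fun j => ?_⟩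
    fin_cases j <;> simp only [Fin.zero_eta, Fin.mk_one, Fin.reduceFinMk, Fin.isValue, Pi.add_apply, Pi.smul_apply, smul_eq_mul] <;>
      rw [div_mul_eq_mul_div, div_mul_eq_mul_div, ← add_div, eq_div_iff hi] <;>
      first
        | ring1
        | linear_combination hp' | linear_combination -hp'
        | linear_combination p 1 * hp' | linear_combination (-(p 1)) * hp'
  · refine ⟨(p 0 * r 1 - p 1 * r 0) / (z 0 * r 1 - z 1 * r 0),
      (z 0 * p 1 - z 1 * p 0) / (z 0 * r 1 - z 1 * r 0), funext fun j => ?_⟩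
    fin_cases j <;> simp only [Fin.zero_eta, Fin.mk_one, Fin.reduceFinMk, Fin.isValue, Pi.add_apply, Pi.smul_apply, smul_eq_mul] <;>
      rw [div_mul_eq_mul_div, div_mul_eq_mul_div, ← add_div, eq_div_iff hi] <;>
      first
        | ring1
        | linear_combination hp' | linear_combination -hp'
        | linear_combination p 2 * hp' | linear_combination (-(p 2)) * hp'

lemma lin_zero_left (x : Fin 3 → k) : lin 0 x = 0 := by simp [lin]

lemma lin_smul_right (l : Fin 3 → k) (μ : k) (x : Fin 3 → k) :
    lin l (μ • x) = μ * lin l x := by simp [lin]; ring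

lemma det3_perm23 (a b c : Fin 3 → k) : det3 a c b = - det3 a b c := by
  simp [det3, lin, cross]; ring

/-- generically positioned quadruple: all four triples are independent -/
def GP (w1 w2 w3 w4 : Fin 3 → k) : Prop :=
  det3 w1 w2 w3 ≠ 0 ∧ det3 w1 w2 w4 ≠ 0 ∧ det3 w1 w3 w4 ≠ 0 ∧ det3 w2 w3 w4 ≠ 0

/-- among points not all on a conic there are four in general position -/
lemma exists_gp {n : ℕ} (hn : 0 < n) (v : Fin n → Fin 3 → k) (hv : ∀ i, v i ≠ 0)
    (hnc : ∀ c : Fin 6 → k, (∀ i, ev c (v i) = 0) → c = 0) :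
    ∃ i1 i2 i3 i4, GP (v i1) (v i2) (v i3) (v i4) := by
  have htwo : ∀ l l' : Fin 3 → k, l ≠ 0 → l' ≠ 0 →
      ¬(∀ m, lin l (v m) = 0 ∨ lin l' (v m) = 0) := by
    intro l l' hl hl' hall
    apply mulForm_ne_zero hl hl'
    apply hnc
    intro m
    rw [ev_mulForm]
    rcases hall m with h | h <;> rw [h] <;> ring
  -- step A: a fully independent triple exists
  have h3 : ∃ a b c, det3 (v a) (v b) (v c) ≠ 0 := by
    by_contra h
    push_neg at h
    by_cases hpair : ∃ a b, cross (v a) (v b) ≠ 0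
    · obtain ⟨a, b, hab⟩ := hpair
      exact htwo _ _ hab hab (fun m => Or.inl (h a b m))
    · push_neg at hpair
      set a : Fin n := ⟨0, hn⟩ with ha
      have hcand : cross (v a) ![1,0,0] ≠ 0 ∨ cross (v a) ![0,1,0] ≠ 0 := by
        by_contra hc
        push_neg at hc
        obtain ⟨hc1, hc2⟩ := hc
        apply hv a
        have e1 := congrFun hc1 1
        have e2 := congrFun hc1 2
        have e3 := congrFun hc2 2
        simp [cross] at e1 e2 e3
        funext j
        fin_cases j <;> simp [e1, e2, e3] <;> assumption
      have key : ∀ l : Fin 3 → k, l ≠ 0 → lin l (v a) = 0 → False := by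
        intro l hl hla
        apply htwo l l hl hl
        intro m
        obtain ⟨μ, hμ⟩ := prop_of_cross_eq_zero (hv a) (hpair a m)
        rw [hμ, lin_smul_right, hla]
        simp
      rcases hcand with hc | hc
      · exact key _ hc (det3_self_left _ _)
      · exact key _ hc (det3_self_left _ _)
  obtain ⟨a, b, c0, habc⟩ := h3
  set x := v a with hx
  set y := v b with hy
  set z := v c0 with hz
  have hl12 : cross x y ≠ 0 := fun h => habc (by simp [det3, h, lin])
  have hl13 : cross x z ≠ 0 := by
    intro h
    have h' : det3 x z y = 0 := by simp [det3, h, lin]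
    rw [det3_perm23] at h'
    exact habc (neg_eq_zero.mp h')
  have hl23 : cross y z ≠ 0 := by
    intro h
    have h' : det3 y z x = 0 := by simp [det3, h, lin]
    rw [det3_cyc] at h'
    exact habc h'
  by_contra hno
  push_neg at hno
  -- every point lies on one of the three lines
  have hcover : ∀ m, lin (cross x y) (v m) = 0 ∨ lin (cross x z) (v m) = 0 ∨
      lin (cross y z) (v m) = 0 := by
    intro m
    by_contra hm
    push_neg at hm
    exact hno a b c0 m ⟨habc, hm.1, hm.2.1, hm.2.2⟩
  -- find a point on line yz only
  have hp : ∃ mp, lin (cross x y) (v mp) ≠ 0 ∧ lin (cross x z) (v mp) ≠ 0 ∧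
      lin (cross y z) (v mp) = 0 := by
    by_contra hcon
    push_neg at hcon
    apply htwo _ _ hl12 hl13
    intro m
    by_contra hm
    push_neg at hm
    have hmm := hcon m hm.1 hm.2
    rcases hcover m with h | h | h
    · exact hm.1 h
    · exact hm.2 h
    · exact hmm h
  -- find a point on line xy only
  have hr : ∃ mr, lin (cross x z) (v mr) ≠ 0 ∧ lin (cross y z) (v mr) ≠ 0 ∧
      lin (cross x y) (v mr) = 0 := by
    by_contra hcon
    push_neg at hcon
    apply htwo _ _ hl13 hl23
    intro m
    by_contra hm
    push_neg at hm
    have hmm := hcon m hm.1 hm.2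
    rcases hcover m with h | h | h
    · exact hmm h
    · exact hm.1 h
    · exact hm.2 h
  obtain ⟨mp, hp1, hp2, hp3⟩ := hp
  obtain ⟨mr, hr1, hr2, hr3⟩ := hr
  set p := v mp with hpdef
  set r := v mr with hrdef
  refine hno a c0 mr mp ⟨hr1, hp2, ?_, ?_⟩
  · -- det3 x r p ≠ 0
    intro hxrp
    have hxr : cross x r ≠ 0 := by
      intro h
      obtain ⟨μ, hμ⟩ := prop_of_cross_eq_zero (hv a) h
      rw [hμ, lin_smul_right] at hr1
      exact hr1 (by rw [show lin (cross x z) x = 0 from det3_self_left x z]; ring)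
    obtain ⟨α, β, hsp⟩ := mem_span2 hxr hxrp
    apply hp1
    rw [hpdef, hsp, lin_add_smul]
    rw [show lin (cross x y) x = 0 from det3_self_left x y, hr3]
    ring
  · -- det3 z r p ≠ 0
    intro hzrp
    have hzr : cross z r ≠ 0 := by
      intro h
      obtain ⟨μ, hμ⟩ := prop_of_cross_eq_zero (hv c0) h
      rw [hμ, lin_smul_right] at hr3
      rcases mul_eq_zero.1 hr3 with h' | h'
      · rw [hμ, h'] at hr1
        simp [lin, Pi.smul_apply] at hr1
      · exact habc h'
    obtain ⟨α, β, hsp⟩ := mem_span2 hzr hzrp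
    have hβ : β = 0 := by
      have := hp3
      rw [hpdef, hsp, lin_add_smul] at this
      rw [show lin (cross y z) z = 0 from det3_self_right y z] at this
      have : β * lin (cross y z) r = 0 := by linear_combination this
      rcases mul_eq_zero.1 this with h' | h'
      · exact h'
      · exact absurd h' hr2
    apply hp2
    rw [hpdef, hsp, hβ, lin_add_smul]
    rw [show lin (cross x z) z = 0 from det3_self_right x z]
    ring

lemma det3_self12 (a c : Fin 3 → k) : det3 a a c = 0 := by
  simp [det3, lin, cross]; ring

lemma lin_cross_swap (a b c : Fin 3 → k) : lin (cross a b) c = - lin (cross b a) c := by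
  simp [lin, cross]; ring

lemma cross_anticomm (a b : Fin 3 → k) : cross a b = - cross b a := by
  funext j; fin_cases j <;> simp [cross] <;> ring

lemma lin_smul_left (μ : k) (l x : Fin 3 → k) : lin (μ • l) x = μ * lin l x := by
  simp [lin]; ring

/-- two distinct lines through a common point `z` meet only at `z` -/
lemma base_pt {z r b l : Fin 3 → k} (hzr : cross z r ≠ 0) (h1 : lin (cross z r) b = 0)
    (hz : lin l z = 0) (hr : lin l r ≠ 0) (hb : lin l b = 0) : ∃ μ : k, b = μ • z := by
  obtain ⟨α, β, hab⟩ := mem_span2 hzr h1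
  have h2 : lin l b = α * lin l z + β * lin l r := by rw [hab, lin_add_smul]
  rw [hb, hz] at h2
  have hβ : β = 0 := by
    have h3 : β * lin l r = 0 := by linear_combination -h2
    rcases mul_eq_zero.1 h3 with h' | h'
    · exact h'
    · exact absurd h' hr
  exact ⟨α, by rw [hab, hβ]; simp⟩

/-- the two degenerate conics spanning the pencil through four general points -/
def c1of (w1 w2 w3 w4 : Fin 3 → k) : Fin 6 → k := mulForm (cross w1 w2) (cross w3 w4)
def c2of (w1 w2 w3 w4 : Fin 3 → k) : Fin 6 → k := mulForm (cross w1 w3) (cross w2 w4)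

lemma c1of_vanish (w1 w2 w3 w4 : Fin 3 → k) :
    ev (c1of w1 w2 w3 w4) w1 = 0 ∧ ev (c1of w1 w2 w3 w4) w2 = 0 ∧
    ev (c1of w1 w2 w3 w4) w3 = 0 ∧ ev (c1of w1 w2 w3 w4) w4 = 0 := by
  refine ⟨?_, ?_, ?_, ?_⟩ <;> rw [c1of, ev_mulForm]
  · rw [show lin (cross w1 w2) w1 = 0 from det3_self_left w1 w2]; ring
  · rw [show lin (cross w1 w2) w2 = 0 from det3_self_right w1 w2]; ring
  · rw [show lin (cross w3 w4) w3 = 0 from det3_self_left w3 w4]; ring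
  · rw [show lin (cross w3 w4) w4 = 0 from det3_self_right w3 w4]; ring

lemma c2of_vanish (w1 w2 w3 w4 : Fin 3 → k) :
    ev (c2of w1 w2 w3 w4) w1 = 0 ∧ ev (c2of w1 w2 w3 w4) w2 = 0 ∧
    ev (c2of w1 w2 w3 w4) w3 = 0 ∧ ev (c2of w1 w2 w3 w4) w4 = 0 := by
  refine ⟨?_, ?_, ?_, ?_⟩ <;> rw [c2of, ev_mulForm]
  · rw [show lin (cross w1 w3) w1 = 0 from det3_self_left w1 w3]; ring
  · rw [show lin (cross w2 w4) w2 = 0 from det3_self_left w2 w4]; ring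
  · rw [show lin (cross w1 w3) w3 = 0 from det3_self_right w1 w3]; ring
  · rw [show lin (cross w2 w4) w4 = 0 from det3_self_right w2 w4]; ring

section GPfacts

variable {w1 w2 w3 w4 : Fin 3 → k} (hGP : GP w1 w2 w3 w4)

include hGP

lemma hd123' : lin (cross w1 w2) w3 ≠ 0 := hGP.1
lemma hd124' : lin (cross w1 w2) w4 ≠ 0 := hGP.2.1
lemma hd134' : lin (cross w1 w3) w4 ≠ 0 := hGP.2.2.1
lemma hd234' : lin (cross w2 w3) w4 ≠ 0 := hGP.2.2.2

lemma hd132' : lin (cross w1 w3) w2 ≠ 0 := by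
  intro h
  apply hGP.1
  have h' : det3 w1 w3 w2 = 0 := h
  rw [det3_perm23] at h'
  exact neg_eq_zero.mp h'

lemma hd142' : lin (cross w1 w4) w2 ≠ 0 := by
  intro h
  apply hGP.2.1
  have h' : det3 w1 w4 w2 = 0 := h
  rw [det3_perm23] at h'
  exact neg_eq_zero.mp h'

lemma hd143' : lin (cross w1 w4) w3 ≠ 0 := by
  intro h
  apply hGP.2.2.1
  have h' : det3 w1 w4 w3 = 0 := h
  rw [det3_perm23] at h'
  exact neg_eq_zero.mp h'

lemma hd243' : lin (cross w2 w4) w3 ≠ 0 := by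
  intro h
  apply hGP.2.2.2
  have h' : det3 w2 w4 w3 = 0 := h
  rw [det3_perm23] at h'
  exact neg_eq_zero.mp h'

lemma hd231' : lin (cross w2 w3) w1 ≠ 0 := by
  intro h
  apply hGP.1
  have h' : det3 w2 w3 w1 = 0 := h
  rwa [det3_cyc] at h'

lemma hd241' : lin (cross w2 w4) w1 ≠ 0 := by
  intro h
  apply hGP.2.1
  have h' : det3 w2 w4 w1 = 0 := h
  rwa [det3_cyc] at h'

lemma hd341' : lin (cross w3 w4) w1 ≠ 0 := by
  intro h
  apply hGP.2.2.1
  have h' : det3 w3 w4 w1 = 0 := h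
  rwa [det3_cyc] at h'

lemma hd342' : lin (cross w3 w4) w2 ≠ 0 := by
  intro h
  apply hGP.2.2.2
  have h' : det3 w3 w4 w2 = 0 := h
  rwa [det3_cyc] at h'

lemma cr12 : cross w1 w2 ≠ 0 := fun h => hd123' hGP (by rw [h, lin_zero_left])
lemma cr13 : cross w1 w3 ≠ 0 := fun h => hd134' hGP (by rw [h, lin_zero_left])
lemma cr14 : cross w1 w4 ≠ 0 := fun h => hd142' hGP (by rw [h, lin_zero_left])
lemma cr23 : cross w2 w3 ≠ 0 := fun h => hd234' hGP (by rw [h, lin_zero_left])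
lemma cr24 : cross w2 w4 ≠ 0 := fun h => hd241' hGP (by rw [h, lin_zero_left])
lemma cr34 : cross w3 w4 ≠ 0 := fun h => hd341' hGP (by rw [h, lin_zero_left])

lemma c1of_ne : c1of w1 w2 w3 w4 ≠ 0 := mulForm_ne_zero (cr12 hGP) (cr34 hGP)
lemma c2of_ne : c2of w1 w2 w3 w4 ≠ 0 := mulForm_ne_zero (cr13 hGP) (cr24 hGP)

/-- base locus of the pencil: common zeros of `c1of` and `c2of` are the four points -/
lemma hbase_lemma {b : Fin 3 → k} (hb1 : ev (c1of w1 w2 w3 w4) b = 0)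
    (hb2 : ev (c2of w1 w2 w3 w4) b = 0) :
    (∃ μ : k, b = μ • w1) ∨ (∃ μ : k, b = μ • w2) ∨
    (∃ μ : k, b = μ • w3) ∨ (∃ μ : k, b = μ • w4) := by
  rw [c1of, ev_mulForm] at hb1
  rw [c2of, ev_mulForm] at hb2
  rcases mul_eq_zero.1 hb1 with h12b | h34b <;> rcases mul_eq_zero.1 hb2 with h13b | h24b
  · exact Or.inl (base_pt (z := w1) (r := w2) (l := cross w1 w3) (cr12 hGP) h12b
      (show lin (cross w1 w3) w1 = 0 from det3_self_left w1 w3) (hd132' hGP) h13b)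
  · refine Or.inr (Or.inl (base_pt (z := w2) (r := w1) (l := cross w2 w4) ?_ ?_
      (show lin (cross w2 w4) w2 = 0 from det3_self_left w2 w4) (hd241' hGP) h24b))
    · intro h
      apply cr12 hGP
      rw [cross_anticomm, h]
      simp
    · rw [lin_cross_swap, h12b]
      simp
  · exact Or.inr (Or.inr (Or.inl (base_pt (z := w3) (r := w4) (l := cross w1 w3) (cr34 hGP)
      h34b (show lin (cross w1 w3) w3 = 0 from det3_self_right w1 w3) (hd134' hGP) h13b)))
  · refine Or.inr (Or.inr (Or.inr (base_pt (z := w4) (r := w3) (l := cross w2 w4) ?_ ?_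
      (show lin (cross w2 w4) w4 = 0 from det3_self_right w2 w4) (hd243' hGP) h24b)))
    · intro h
      apply cr34 hGP
      rw [cross_anticomm, h]
      simp
    · rw [lin_cross_swap, h34b]
      simp

lemma diag_y_facts :
    ∃ y : Fin 3 → k, ev (c1of w1 w2 w3 w4) y = 0 ∧ ev (c2of w1 w2 w3 w4) y ≠ 0 := by
  set y : Fin 3 → k := cross (cross w1 w2) (cross w3 w4) with hy
  have hy12 : lin (cross w1 w2) y = 0 := lin_cross_self _ _
  have hy34 : lin (cross w3 w4) y = 0 := lin_cross_self' _ _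
  have hy0 : y ≠ 0 := by
    intro h
    obtain ⟨μ, hμ⟩ := prop_of_cross_eq_zero (cr12 hGP) h
    apply hd341' hGP
    rw [hμ, lin_smul_left]
    rw [show lin (cross w1 w2) w1 = 0 from det3_self_left w1 w2]
    ring
  refine ⟨y, ?_, ?_⟩
  · rw [c1of, ev_mulForm, hy12]; ring
  · rw [c2of, ev_mulForm]
    apply mul_ne_zero
    · intro h13y
      obtain ⟨μ, hμ⟩ := base_pt (z := w1) (r := w2) (l := cross w1 w3) (cr12 hGP) hy12
        (show lin (cross w1 w3) w1 = 0 from det3_self_left w1 w3) (hd132' hGP) h13y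
      rw [hμ, lin_smul_right] at hy34
      rcases mul_eq_zero.1 hy34 with h' | h'
      · exact hy0 (by rw [hμ, h']; simp)
      · exact hd341' hGP h'
    · intro h24y
      obtain ⟨μ, hμ⟩ := base_pt (z := w2) (r := w1) (l := cross w2 w4)
        (fun h => cr12 hGP (by rw [cross_anticomm, h]; simp))
        (by rw [lin_cross_swap, hy12]; simp)
        (show lin (cross w2 w4) w2 = 0 from det3_self_left w2 w4) (hd241' hGP) h24y
      rw [hμ, lin_smul_right] at hy34
      rcases mul_eq_zero.1 hy34 with h' | h'
      · exact hy0 (by rw [hμ, h']; simp)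
      · exact hd342' hGP h'

lemma diag_y'_facts :
    ∃ y' : Fin 3 → k, ev (c2of w1 w2 w3 w4) y' = 0 ∧ ev (c1of w1 w2 w3 w4) y' ≠ 0 := by
  set y' : Fin 3 → k := cross (cross w1 w3) (cross w2 w4) with hy
  have hy13 : lin (cross w1 w3) y' = 0 := lin_cross_self _ _
  have hy24 : lin (cross w2 w4) y' = 0 := lin_cross_self' _ _
  have hy0 : y' ≠ 0 := by
    intro h
    obtain ⟨μ, hμ⟩ := prop_of_cross_eq_zero (cr13 hGP) h
    apply hd243' hGP
    rw [hμ, lin_smul_left]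
    rw [show lin (cross w1 w3) w3 = 0 from det3_self_right w1 w3]
    ring
  refine ⟨y', ?_, ?_⟩
  · rw [c2of, ev_mulForm, hy13]; ring
  · rw [c1of, ev_mulForm]
    apply mul_ne_zero
    · intro h12y
      obtain ⟨μ, hμ⟩ := base_pt (z := w1) (r := w2) (l := cross w1 w3) (cr12 hGP) h12y
        (show lin (cross w1 w3) w1 = 0 from det3_self_left w1 w3) (hd132' hGP) hy13
      rw [hμ, lin_smul_right] at hy24
      rcases mul_eq_zero.1 hy24 with h' | h'
      · exact hy0 (by rw [hμ, h']; simp)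
      · exact hd241' hGP h'
    · intro h34y
      obtain ⟨μ, hμ⟩ := base_pt (z := w3) (r := w4) (l := cross w1 w3) (cr34 hGP) h34y
        (show lin (cross w1 w3) w3 = 0 from det3_self_right w1 w3) (hd134' hGP) hy13
      rw [hμ, lin_smul_right] at hy24
      rcases mul_eq_zero.1 hy24 with h' | h'
      · exact hy0 (by rw [hμ, h']; simp)
      · exact hd243' hGP h'

lemma pencil_indep : ∀ s t : k,
    s • c1of w1 w2 w3 w4 + t • c2of w1 w2 w3 w4 = 0 → s = 0 ∧ t = 0 := by
  obtain ⟨y, hc1y, hc2y⟩ := diag_y_facts hGP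
  obtain ⟨y', hc2y', hc1y'⟩ := diag_y'_facts hGP
  intro s t hst
  have ey : ev (s • c1of w1 w2 w3 w4 + t • c2of w1 w2 w3 w4) y = 0 := by
    rw [hst]; simp [ev]
  have ey' : ev (s • c1of w1 w2 w3 w4 + t • c2of w1 w2 w3 w4) y' = 0 := by
    rw [hst]; simp [ev]
  rw [ev_add_left, ev_smul_left, ev_smul_left, hc1y] at ey
  rw [ev_add_left, ev_smul_left, ev_smul_left, hc2y'] at ey'
  constructor
  · have hs : s * ev (c1of w1 w2 w3 w4) y' = 0 := by linear_combination ey'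
    exact (mul_eq_zero.1 hs).resolve_right hc1y'
  · have ht : t * ev (c2of w1 w2 w3 w4) y = 0 := by linear_combination ey
    exact (mul_eq_zero.1 ht).resolve_right hc2y

lemma pencil_span : ∀ c : Fin 6 → k, ev c w1 = 0 → ev c w2 = 0 → ev c w3 = 0 → ev c w4 = 0 →
    ∃ α β : k, c = α • c1of w1 w2 w3 w4 + β • c2of w1 w2 w3 w4 := by
  classical
  set W : Fin 4 → (Fin 3 → k) := ![w1, w2, w3, w4] with hW
  set M4 : Matrix (Fin 4) (Fin 6) k := Matrix.of (fun s j => ver (W s) j) with hM4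
  set E : (Fin 6 → k) →ₗ[k] (Fin 4 → k) := M4.mulVecLin with hEdef
  have hEapp : ∀ (c : Fin 6 → k) (s : Fin 4), E c s = ev c (W s) := by
    intro c s
    show (M4.mulVec c) s = _
    simp only [Matrix.mulVec, dotProduct, hM4, Matrix.of_apply, ev]
    exact Finset.sum_congr rfl fun j _ => mul_comm _ _
  set d1 : Fin 6 → k := mulForm (cross w2 w3) (cross w2 w4) with hd1
  set d2 : Fin 6 → k := mulForm (cross w1 w3) (cross w1 w4) with hd2
  set d3 : Fin 6 → k := mulForm (cross w1 w2) (cross w1 w4) with hd3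
  set d4 : Fin 6 → k := mulForm (cross w1 w2) (cross w1 w3) with hd4
  have hδ1 : ev d1 w1 ≠ 0 := by
    rw [hd1, ev_mulForm]; exact mul_ne_zero (hd231' hGP) (hd241' hGP)
  have hδ2 : ev d2 w2 ≠ 0 := by
    rw [hd2, ev_mulForm]; exact mul_ne_zero (hd132' hGP) (hd142' hGP)
  have hδ3 : ev d3 w3 ≠ 0 := by
    rw [hd3, ev_mulForm]; exact mul_ne_zero (hd123' hGP) (hd143' hGP)
  have hδ4 : ev d4 w4 ≠ 0 := by
    rw [hd4, ev_mulForm]; exact mul_ne_zero (hd124' hGP) (hd134' hGP)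
  have hz12 : ev d1 w2 = 0 := by
    rw [hd1, ev_mulForm, show lin (cross w2 w3) w2 = 0 from det3_self_left w2 w3]; ring
  have hz13 : ev d1 w3 = 0 := by
    rw [hd1, ev_mulForm, show lin (cross w2 w3) w3 = 0 from det3_self_right w2 w3]; ring
  have hz14 : ev d1 w4 = 0 := by
    rw [hd1, ev_mulForm, show lin (cross w2 w4) w4 = 0 from det3_self_right w2 w4]; ring
  have hz21 : ev d2 w1 = 0 := by
    rw [hd2, ev_mulForm, show lin (cross w1 w3) w1 = 0 from det3_self_left w1 w3]; ring
  have hz23 : ev d2 w3 = 0 := by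
    rw [hd2, ev_mulForm, show lin (cross w1 w3) w3 = 0 from det3_self_right w1 w3]; ring
  have hz24 : ev d2 w4 = 0 := by
    rw [hd2, ev_mulForm, show lin (cross w1 w4) w4 = 0 from det3_self_right w1 w4]; ring
  have hz31 : ev d3 w1 = 0 := by
    rw [hd3, ev_mulForm, show lin (cross w1 w2) w1 = 0 from det3_self_left w1 w2]; ring
  have hz32 : ev d3 w2 = 0 := by
    rw [hd3, ev_mulForm, show lin (cross w1 w2) w2 = 0 from det3_self_right w1 w2]; ring
  have hz34 : ev d3 w4 = 0 := by
    rw [hd3, ev_mulForm, show lin (cross w1 w4) w4 = 0 from det3_self_right w1 w4]; ring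
  have hz41 : ev d4 w1 = 0 := by
    rw [hd4, ev_mulForm, show lin (cross w1 w2) w1 = 0 from det3_self_left w1 w2]; ring
  have hz42 : ev d4 w2 = 0 := by
    rw [hd4, ev_mulForm, show lin (cross w1 w2) w2 = 0 from det3_self_right w1 w2]; ring
  have hz43 : ev d4 w3 = 0 := by
    rw [hd4, ev_mulForm, show lin (cross w1 w3) w3 = 0 from det3_self_right w1 w3]; ring
  have hsurj : Function.Surjective E := by
    intro yv
    set bigc : Fin 6 → k := (yv 0 / ev d1 w1) • d1 + (yv 1 / ev d2 w2) • d2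
      + (yv 2 / ev d3 w3) • d3 + (yv 3 / ev d4 w4) • d4 with hbigc
    refine ⟨bigc, ?_⟩
    funext s
    rw [hEapp]
    fin_cases s
    · show ev bigc w1 = yv 0
      rw [hbigc, ev_add_left, ev_add_left, ev_add_left, ev_smul_left, ev_smul_left,
        ev_smul_left, ev_smul_left, hz21, hz31, hz41, div_mul_cancel₀ _ hδ1]; ring
    · show ev bigc w2 = yv 1
      rw [hbigc, ev_add_left, ev_add_left, ev_add_left, ev_smul_left, ev_smul_left,
        ev_smul_left, ev_smul_left, hz12, hz32, hz42, div_mul_cancel₀ _ hδ2]; ring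
    · show ev bigc w3 = yv 2
      rw [hbigc, ev_add_left, ev_add_left, ev_add_left, ev_smul_left, ev_smul_left,
        ev_smul_left, ev_smul_left, hz13, hz23, hz43, div_mul_cancel₀ _ hδ3]; ring
    · show ev bigc w4 = yv 3
      rw [hbigc, ev_add_left, ev_add_left, ev_add_left, ev_smul_left, ev_smul_left,
        ev_smul_left, ev_smul_left, hz14, hz24, hz34, div_mul_cancel₀ _ hδ4]; ring
  have h64 := LinearMap.finrank_range_add_finrank_ker E
  rw [LinearMap.range_eq_top.2 hsurj, finrank_top] at h64
  have hfr : Module.finrank k (LinearMap.ker E) = 2 := by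
    rw [Module.finrank_pi, Module.finrank_pi] at h64
    simp at h64
    omega
  obtain ⟨q1, q2, q3, q4⟩ := c1of_vanish w1 w2 w3 w4
  obtain ⟨p1, p2, p3, p4⟩ := c2of_vanish w1 w2 w3 w4
  have hm1 : c1of w1 w2 w3 w4 ∈ LinearMap.ker E := by
    rw [LinearMap.mem_ker]
    funext s
    rw [hEapp]
    fin_cases s
    · exact q1
    · exact q2
    · exact q3
    · exact q4
  have hm2 : c2of w1 w2 w3 w4 ∈ LinearMap.ker E := by
    rw [LinearMap.mem_ker]
    funext s
    rw [hEapp]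
    fin_cases s
    · exact p1
    · exact p2
    · exact p3
    · exact p4
  set u1 : LinearMap.ker E := ⟨c1of w1 w2 w3 w4, hm1⟩ with hu1
  set u2 : LinearMap.ker E := ⟨c2of w1 w2 w3 w4, hm2⟩ with hu2
  have li : LinearIndependent k ![u1, u2] := by
    rw [LinearIndependent.pair_iff]
    intro s t hst
    apply pencil_indep hGP s t
    have h' := congrArg Subtype.val hst
    simpa [hu1, hu2] using h'
  have hcard : Fintype.card (Fin 2) = Module.finrank k (LinearMap.ker E) := by
    simp [hfr]
  set Bas := basisOfLinearIndependentOfCardEqFinrank li hcard with hBas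
  have hBcoe := coe_basisOfLinearIndependentOfCardEqFinrank li hcard
  intro c e1 e2 e3 e4
  have hmc : c ∈ LinearMap.ker E := by
    rw [LinearMap.mem_ker]
    funext s
    rw [hEapp]
    fin_cases s
    · exact e1
    · exact e2
    · exact e3
    · exact e4
  have hrep := Bas.sum_repr ⟨c, hmc⟩
  rw [Fin.sum_univ_two] at hrep
  refine ⟨Bas.repr ⟨c, hmc⟩ 0, Bas.repr ⟨c, hmc⟩ 1, ?_⟩
  have hB0 : Bas 0 = u1 := by rw [← hBas] at hBcoe; rw [congrFun hBcoe 0]; rfl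
  have hB1 : Bas 1 = u2 := by rw [← hBas] at hBcoe; rw [congrFun hBcoe 1]; rfl
  have := congrArg Subtype.val hrep
  rw [hB0, hB1] at this
  simpa [hu1, hu2] using this.symm

end GPfacts

lemma keyPartition {n : ℕ} (hn : 0 < n) (v : Fin n → Fin 3 → k) (hv : ∀ i, v i ≠ 0)
    (hnc : ∀ c : Fin 6 → k, (∀ i, ev c (v i) = 0) → c = 0) :
    ∃ P : Fin n → Fin 6, Function.Surjective P ∧
      ∀ b : Fin 6 → Fin n, (∀ j, P (b j) = j) →
        ∀ c : Fin 6 → k, (∀ j, ev c (v (b j)) = 0) → c = 0 := by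
  classical
  obtain ⟨t1, t2, t3, t4, hGP⟩ := exists_gp hn v hv hnc
  set w1 := v t1 with hw1
  set w2 := v t2 with hw2
  set w3 := v t3 with hw3
  set w4 := v t4 with hw4
  set C1 := c1of w1 w2 w3 w4 with hC1
  set C2 := c2of w1 w2 w3 w4 with hC2
  obtain ⟨q1, q2, q3, q4⟩ := c1of_vanish w1 w2 w3 w4
  obtain ⟨p1, p2, p3, p4⟩ := c2of_vanish w1 w2 w3 w4
  have hvprop : ∀ (cq : Fin 6 → k) (wv x : Fin 3 → k), ev cq wv = 0 →
      (∃ μ : k, x = μ • wv) → ev cq x = 0 := by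
    rintro cq wv x h ⟨μ, hμ⟩
    rw [hμ, ev_smul_pt, h]; ring
  have hPP : ∀ i, ((∃ μ : k, v i = μ • w1) ∨ (∃ μ : k, v i = μ • w2) ∨
      (∃ μ : k, v i = μ • w3) ∨ (∃ μ : k, v i = μ • w4)) →
      ev C1 (v i) = 0 ∧ ev C2 (v i) = 0 := by
    intro i h
    rcases h with h | h | h | h
    · exact ⟨hvprop _ _ _ q1 h, hvprop _ _ _ p1 h⟩
    · exact ⟨hvprop _ _ _ q2 h, hvprop _ _ _ p2 h⟩
    · exact ⟨hvprop _ _ _ q3 h, hvprop _ _ _ p3 h⟩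
    · exact ⟨hvprop _ _ _ q4 h, hvprop _ _ _ p4 h⟩
  have hi5 : ∃ i5, ¬((∃ μ : k, v i5 = μ • w1) ∨ (∃ μ : k, v i5 = μ • w2) ∨
      (∃ μ : k, v i5 = μ • w3) ∨ (∃ μ : k, v i5 = μ • w4)) := by
    by_contra hcon
    push_neg at hcon
    apply c1of_ne hGP
    rw [← hC1]
    apply hnc
    intro i
    rcases hcon i with h | h | h | h
    · exact hvprop _ _ _ q1 h
    · exact hvprop _ _ _ q2 h
    · exact hvprop _ _ _ q3 h
    · exact hvprop _ _ _ q4 h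
  obtain ⟨i5, hnp5⟩ := hi5
  set f5 := ev C1 (v i5) with hf5
  set g5 := ev C2 (v i5) with hg5
  have hfg5 : ¬(f5 = 0 ∧ g5 = 0) := by
    rintro ⟨h1, h2⟩
    rw [hf5] at h1
    rw [hg5] at h2
    exact hnp5 (hbase_lemma hGP h1 h2)
  set D : Fin n → k := fun i => f5 * ev C2 (v i) - g5 * ev C1 (v i) with hD
  have hi6 : ∃ i6, ¬((∃ μ : k, v i6 = μ • w1) ∨ (∃ μ : k, v i6 = μ • w2) ∨
      (∃ μ : k, v i6 = μ • w3) ∨ (∃ μ : k, v i6 = μ • w4)) ∧ D i6 ≠ 0 := by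
    by_contra hcon
    push_neg at hcon
    have hccz : ∀ i, ev ((-g5) • C1 + f5 • C2) (v i) = 0 := by
      intro i
      rw [ev_add_left, ev_smul_left, ev_smul_left]
      by_cases hdisj : (∃ μ : k, v i = μ • w1) ∨ (∃ μ : k, v i = μ • w2) ∨
        (∃ μ : k, v i = μ • w3) ∨ (∃ μ : k, v i = μ • w4)
      · obtain ⟨hA, hB⟩ := hPP i hdisj
        rw [hA, hB]; ring
      · push_neg at hdisj
        have hD0 := hcon i hdisj
        simp only [hD] at hD0
        linear_combination hD0
    have hcc0 := hnc _ hccz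
    obtain ⟨hf, hg⟩ := pencil_indep hGP (-g5) f5 (by rw [← hC1, ← hC2]; exact hcc0)
    exact hfg5 ⟨hg, neg_eq_zero.mp hf⟩
  obtain ⟨i6, hnp6, hD6⟩ := hi6
  set P : Fin n → Fin 6 := fun i =>
    if (∃ μ : k, v i = μ • w1) then 0 else if (∃ μ : k, v i = μ • w2) then 1
    else if (∃ μ : k, v i = μ • w3) then 2 else if (∃ μ : k, v i = μ • w4) then 3
    else if D i = 0 then 4 else 5 with hPdef
  have c01 : ∃ μ : k, v t1 = μ • w1 := ⟨1, by rw [hw1, one_smul]⟩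
  have c12 : ∃ μ : k, v t2 = μ • w2 := ⟨1, by rw [hw2, one_smul]⟩
  have c23 : ∃ μ : k, v t3 = μ • w3 := ⟨1, by rw [hw3, one_smul]⟩
  have c34 : ∃ μ : k, v t4 = μ • w4 := ⟨1, by rw [hw4, one_smul]⟩
  have n21 : ¬∃ μ : k, v t2 = μ • w1 := by
    rintro ⟨μ, hμ⟩
    apply hGP.1
    rw [hw2, hμ, det3_smul_mid, show det3 w1 w1 w3 = 0 from det3_self12 w1 w3]; ring
  have n31 : ¬∃ μ : k, v t3 = μ • w1 := by
    rintro ⟨μ, hμ⟩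
    apply hGP.1
    rw [hw3, hμ, det3_smul_right, show det3 w1 w2 w1 = 0 from det3_self_left w1 w2]; ring
  have n32 : ¬∃ μ : k, v t3 = μ • w2 := by
    rintro ⟨μ, hμ⟩
    apply hGP.1
    rw [hw3, hμ, det3_smul_right, show det3 w1 w2 w2 = 0 from det3_self_right w1 w2]; ring
  have n41 : ¬∃ μ : k, v t4 = μ • w1 := by
    rintro ⟨μ, hμ⟩
    apply hGP.2.1
    rw [hw4, hμ, det3_smul_right, show det3 w1 w2 w1 = 0 from det3_self_left w1 w2]; ring
  have n42 : ¬∃ μ : k, v t4 = μ • w2 := by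
    rintro ⟨μ, hμ⟩
    apply hGP.2.1
    rw [hw4, hμ, det3_smul_right, show det3 w1 w2 w2 = 0 from det3_self_right w1 w2]; ring
  have n43 : ¬∃ μ : k, v t4 = μ • w3 := by
    rintro ⟨μ, hμ⟩
    apply hGP.2.2.1
    rw [hw4, hμ, det3_smul_right, show det3 w1 w3 w3 = 0 from det3_self_right w1 w3]; ring
  have hD5 : D i5 = 0 := by
    simp only [hD]
    rw [← hf5, ← hg5]; ring
  refine ⟨P, ?_, ?_⟩
  · intro j
    fin_cases j
    · exact ⟨t1, by rw [hPdef]; dsimp only; rw [if_pos c01]; rfl⟩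
    · refine ⟨t2, ?_⟩
      rw [hPdef]; dsimp only
      rw [if_neg n21, if_pos c12]; rfl
    · refine ⟨t3, ?_⟩
      rw [hPdef]; dsimp only
      rw [if_neg n31, if_neg n32, if_pos c23]; rfl
    · refine ⟨t4, ?_⟩
      rw [hPdef]; dsimp only
      rw [if_neg n41, if_neg n42, if_neg n43, if_pos c34]; rfl
    · refine ⟨i5, ?_⟩
      rw [hPdef]; dsimp only
      rw [if_neg (fun h => hnp5 (Or.inl h)), if_neg (fun h => hnp5 (Or.inr (Or.inl h))),
        if_neg (fun h => hnp5 (Or.inr (Or.inr (Or.inl h)))),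
        if_neg (fun h => hnp5 (Or.inr (Or.inr (Or.inr h)))), if_pos hD5]; rfl
    · refine ⟨i6, ?_⟩
      rw [hPdef]; dsimp only
      rw [if_neg (fun h => hnp6 (Or.inl h)), if_neg (fun h => hnp6 (Or.inr (Or.inl h))),
        if_neg (fun h => hnp6 (Or.inr (Or.inr (Or.inl h)))),
        if_neg (fun h => hnp6 (Or.inr (Or.inr (Or.inr h)))), if_neg hD6]; rfl
  · intro b hb c hc
    have hx1 : ∃ μ : k, v (b 0) = μ • w1 := by
      have h0 := hb 0
      rw [hPdef] at h0
      dsimp only at h0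
      split_ifs at h0 <;> first | exact absurd h0 (by decide) | assumption
    have hx2 : ∃ μ : k, v (b 1) = μ • w2 := by
      have h0 := hb 1
      rw [hPdef] at h0
      dsimp only at h0
      split_ifs at h0 <;> first | exact absurd h0 (by decide) | assumption
    have hx3 : ∃ μ : k, v (b 2) = μ • w3 := by
      have h0 := hb 2
      rw [hPdef] at h0
      dsimp only at h0
      split_ifs at h0 <;> first | exact absurd h0 (by decide) | assumption
    have hx4 : ∃ μ : k, v (b 3) = μ • w4 := by
      have h0 := hb 3
      rw [hPdef] at h0
      dsimp only at h0
      split_ifs at h0 <;> first | exact absurd h0 (by decide) | assumption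
    have hx5 : (¬(∃ μ : k, v (b 4) = μ • w1)) ∧ (¬(∃ μ : k, v (b 4) = μ • w2)) ∧
        (¬(∃ μ : k, v (b 4) = μ • w3)) ∧ (¬(∃ μ : k, v (b 4) = μ • w4)) ∧ D (b 4) = 0 := by
      have h0 := hb 4
      rw [hPdef] at h0
      dsimp only at h0
      split_ifs at h0 <;>
        first
          | exact absurd h0 (by decide)
          | exact ⟨by assumption, by assumption, by assumption, by assumption, by assumption⟩
    have hx6 : (¬(∃ μ : k, v (b 5) = μ • w1)) ∧ (¬(∃ μ : k, v (b 5) = μ • w2)) ∧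
        (¬(∃ μ : k, v (b 5) = μ • w3)) ∧ (¬(∃ μ : k, v (b 5) = μ • w4)) ∧ D (b 5) ≠ 0 := by
      have h0 := hb 5
      rw [hPdef] at h0
      dsimp only at h0
      split_ifs at h0 <;>
        first
          | exact absurd h0 (by decide)
          | exact ⟨by assumption, by assumption, by assumption, by assumption, by assumption⟩
    have hmu : ∀ (j : Fin 6) (wv : Fin 3 → k), (∃ μ : k, v (b j) = μ • wv) →
        ev c wv = 0 := by
      rintro j wv ⟨μ, hμ⟩
      have hμ0 : μ ≠ 0 := by
        rintro rfl
        exact hv (b j) (by rw [hμ]; simp)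
      have h := hc j
      rw [hμ, ev_smul_pt] at h
      exact (mul_eq_zero.1 h).resolve_left (pow_ne_zero 2 hμ0)
    have e1 : ev c w1 = 0 := hmu 0 w1 hx1
    have e2 : ev c w2 = 0 := hmu 1 w2 hx2
    have e3 : ev c w3 = 0 := hmu 2 w3 hx3
    have e4 : ev c w4 = 0 := hmu 3 w4 hx4
    obtain ⟨α, β, hcab⟩ := pencil_span hGP c e1 e2 e3 e4
    rw [← hC1, ← hC2] at hcab
    have hcb4 := hc 4
    have hcb5 := hc 5
    rw [hcab, ev_add_left, ev_smul_left, ev_smul_left] at hcb4 hcb5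
    set F5 := ev C1 (v (b 4)) with hF5
    set G5 := ev C2 (v (b 4)) with hG5
    set F6 := ev C1 (v (b 5)) with hF6
    set G6 := ev C2 (v (b 5)) with hG6
    have hD4' : f5 * G5 - g5 * F5 = 0 := by
      have := hx5.2.2.2.2
      simp only [hD] at this
      rw [← hF5, ← hG5] at this
      exact this
    have hD5' : f5 * G6 - g5 * F6 ≠ 0 := by
      have := hx6.2.2.2.2
      simp only [hD] at this
      rw [← hF6, ← hG6] at this
      exact this
    have hcls4 : ¬(F5 = 0 ∧ G5 = 0) := by
      rintro ⟨hA, hB⟩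
      rw [hF5] at hA
      rw [hG5] at hB
      rcases hbase_lemma hGP hA hB with h | h | h | h
      · exact hx5.1 h
      · exact hx5.2.1 h
      · exact hx5.2.2.1 h
      · exact hx5.2.2.2.1 h
    have hDet : F5 * G6 - F6 * G5 ≠ 0 := by
      intro hdd
      apply hcls4
      constructor
      · have h' : (f5 * G6 - g5 * F6) * F5 = 0 := by
          linear_combination f5 * hdd + F6 * hD4'
        exact (mul_eq_zero.1 h').resolve_left hD5'
      · have h' : (f5 * G6 - g5 * F6) * G5 = 0 := by
          linear_combination g5 * hdd + G6 * hD4'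
        exact (mul_eq_zero.1 h').resolve_left hD5'
    have hα : α = 0 := by
      have h' : α * (F5 * G6 - F6 * G5) = 0 := by
        linear_combination G6 * hcb4 - G5 * hcb5
      exact (mul_eq_zero.1 h').resolve_right hDet
    have hβ : β = 0 := by
      have h' : β * (F5 * G6 - F6 * G5) = 0 := by
        linear_combination F5 * hcb5 - F6 * hcb4
      exact (mul_eq_zero.1 h').resolve_right hDet
    rw [hcab, hα, hβ]
    simp

lemma det_ne_zero_of_indep {M : Matrix (Fin 6) (Fin 6) k}
    (h : ∀ c : Fin 6 → k, (∀ j, ∑ r, c r * M r j = 0) → c = 0) : M.det ≠ 0 := by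
  intro hdet
  obtain ⟨c, hc0, hcv⟩ := Matrix.exists_vecMul_eq_zero_iff.2 hdet
  apply hc0
  apply h
  intro j
  have := congrFun hcv j
  simpa [Matrix.vecMul, dotProduct] using this

lemma det_zero_of_conic {M : Matrix (Fin 6) (Fin 6) k} (c : Fin 6 → k) (hc0 : c ≠ 0)
    (h : ∀ j, ∑ r, c r * M r j = 0) : M.det = 0 := by
  rw [← Matrix.exists_vecMul_eq_zero_iff]
  exact ⟨c, hc0, funext fun j => by simpa [Matrix.vecMul, dotProduct] using h j⟩

lemma pigeonhole6 {n : ℕ} {H : Finset (Fin n)} (hcard : H.card = 6) (P : Fin n → Fin 6)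
    (hno : ¬∀ j : Fin 6, (H.filter fun i => P i = j).card = 1) :
    ∃ h1 ∈ H, ∃ h2 ∈ H, h1 ≠ h2 ∧ P h1 = P h2 := by
  classical
  by_contra hcon
  push_neg at hcon
  apply hno
  have hle : ∀ j : Fin 6, (H.filter fun i => P i = j).card ≤ 1 := by
    intro j
    rw [Finset.card_le_one]
    intro a ha b hb
    rw [Finset.mem_filter] at ha hb
    by_contra hab
    exact hcon a ha.1 b hb.1 hab (ha.2.trans hb.2.symm)
  have hsum : ∑ j : Fin 6, (H.filter fun i => P i = j).card = 6 := by
    rw [← Finset.card_eq_sum_card_fiberwise (fun x _ => Finset.mem_univ (P x)), hcard]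
  intro j
  by_contra hj
  have hlt : ∑ j' : Fin 6, (H.filter fun i => P i = j').card < ∑ _j' : Fin 6, 1 :=
    Finset.sum_lt_sum (fun i _ => hle i) ⟨j, Finset.mem_univ j, lt_of_le_of_ne (hle j) hj⟩
  rw [hsum] at hlt
  simp at hlt

/-- six explicit points whose Veronese images form a basis of `k⁶` -/
def wbasis : Fin 6 → Fin 3 → k :=
  ![![1,0,0], ![0,1,0], ![0,0,1], ![1,1,0], ![1,0,1], ![0,1,1]]

lemma wbasis_ne_zero (j : Fin 6) : (wbasis : Fin 6 → Fin 3 → k) j ≠ 0 := by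
  intro h
  fin_cases j
  · exact one_ne_zero (α := k) (by simpa [wbasis] using congrFun h 0)
  · exact one_ne_zero (α := k) (by simpa [wbasis] using congrFun h 1)
  · exact one_ne_zero (α := k) (by simpa [wbasis] using congrFun h 2)
  · exact one_ne_zero (α := k) (by simpa [wbasis] using congrFun h 0)
  · exact one_ne_zero (α := k) (by simpa [wbasis] using congrFun h 0)
  · exact one_ne_zero (α := k) (by simpa [wbasis] using congrFun h 1)

lemma wbasis_indep : ∀ c : Fin 6 → k, (∀ j, ev c ((wbasis : Fin 6 → Fin 3 → k) j) = 0) → c = 0 := by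
  intro c h
  have h0 := h 0
  have h1 := h 1
  have h2 := h 2
  have h3 := h 3
  have h4 := h 4
  have h5 := h 5
  simp [ev, wbasis, ver, Fin.sum_univ_six, Matrix.vecHead, Matrix.vecTail] at h0 h1 h2 h3 h4 h5
  funext j
  fin_cases j <;> simp
  · exact h0
  · exact h1
  · exact h2
  · linear_combination h3 - h0 - h1
  · linear_combination h4 - h0 - h2
  · linear_combination h5 - h1 - h2

end ConicAux


theorem phiH_cut_out_conic_iff_transversal {k : Type*} [Field k] [IsAlgClosed k]
    {n : ℕ} (hn : 6 ≤ n) (𝒯 : Set (Finset (Fin n))) (h𝒯 : ∀ H ∈ 𝒯, H.card = 6) :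
    (∀ v : Fin n → (Fin 3 → k), (∀ i, v i ≠ 0) →
        ((∀ (H : Finset (Fin n)) (hH : H ∈ 𝒯),
            Matrix.det (Matrix.of fun r j =>
              ver (v (H.orderEmbOfFin (h𝒯 H hH) j)) r) = 0) ↔
          ∃ c : Fin 6 → k, c ≠ 0 ∧ ∀ i, ∑ j, c j * ver (v i) j = 0)) ↔
      Transversal n 6 𝒯 := by
  open ConicAux in
  constructor
  · -- the equations cut out the conic locus → transversality
    intro hlhs P hPsurj
    classical
    set v : Fin n → Fin 3 → k := fun i => wbasis (P i) with hvdef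
    have hvnz : ∀ i, v i ≠ 0 := fun i => wbasis_ne_zero (P i)
    have hnoconic : ¬∃ c : Fin 6 → k, c ≠ 0 ∧ ∀ i, ∑ j, c j * ver (v i) j = 0 := by
      rintro ⟨c, hc0, hc⟩
      apply hc0
      apply wbasis_indep
      intro j
      obtain ⟨i, hi⟩ := hPsurj j
      have hci := hc i
      rw [show v i = wbasis j from by rw [hvdef]; dsimp only; rw [hi]] at hci
      exact hci
    have hnotall : ¬(∀ (H : Finset (Fin n)) (hH : H ∈ 𝒯),
        Matrix.det (Matrix.of fun r j =>
          ver (v (H.orderEmbOfFin (h𝒯 H hH) j)) r) = 0) :=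
      fun hall => hnoconic ((hlhs v hvnz).1 hall)
    push_neg at hnotall
    obtain ⟨H, hH, hdet⟩ := hnotall
    refine ⟨H, hH, ?_⟩
    by_contra hno
    apply hdet
    obtain ⟨h1, hh1, h2, hh2, hne, hPeq⟩ := pigeonhole6 (h𝒯 H hH) P hno
    have hr1 : h1 ∈ Set.range (H.orderEmbOfFin (h𝒯 H hH)) := by
      rw [Finset.range_orderEmbOfFin]; exact hh1
    have hr2 : h2 ∈ Set.range (H.orderEmbOfFin (h𝒯 H hH)) := by
      rw [Finset.range_orderEmbOfFin]; exact hh2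
    obtain ⟨j1, hj1⟩ := hr1
    obtain ⟨j2, hj2⟩ := hr2
    apply Matrix.det_zero_of_column_eq
      (show j1 ≠ j2 from fun h => hne (by rw [← hj1, ← hj2, h]))
    intro r
    show ver (v (H.orderEmbOfFin (h𝒯 H hH) j1)) r = ver (v (H.orderEmbOfFin (h𝒯 H hH) j2)) r
    rw [hj1, hj2, hvdef]
    dsimp only
    rw [hPeq]
  · -- transversality → the equations cut out the conic locus
    intro htr v hvnz
    constructor
    · intro hall
      by_contra hnoc
      have hnc : ∀ c : Fin 6 → k, (∀ i, ev c (v i) = 0) → c = 0 := by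
        intro c hc
        by_contra hc0
        exact hnoc ⟨c, hc0, hc⟩
      obtain ⟨P, hPsurj, hkey⟩ :=
        keyPartition (Nat.lt_of_lt_of_le (by norm_num) hn) v hvnz hnc
      obtain ⟨H, hH, hfib⟩ := htr P hPsurj
      have hbex : ∀ j : Fin 6, ∃ h, h ∈ H ∧ P h = j := by
        intro j
        have hone := hfib j
        rw [Finset.card_eq_one] at hone
        obtain ⟨a, ha⟩ := hone
        have hma : a ∈ H.filter fun i => P i = j := ha ▸ Finset.mem_singleton_self a
        rw [Finset.mem_filter] at hma
        exact ⟨a, hma⟩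
      choose b hbH hbP using hbex
      have hdetne : Matrix.det (Matrix.of fun r j =>
          ver (v (H.orderEmbOfFin (h𝒯 H hH) j)) r) ≠ 0 := by
        apply det_ne_zero_of_indep
        intro c hc
        apply hkey b hbP c
        intro j
        have hrng : b j ∈ Set.range (H.orderEmbOfFin (h𝒯 H hH)) := by
          rw [Finset.range_orderEmbOfFin]; exact hbH j
        obtain ⟨j', hj'⟩ := hrng
        have hcj := hc j'
        show ev c (v (b j)) = 0
        rw [← hj']
        exact hcj
      exact hdetne (hall H hH)
    · rintro ⟨c, hc0, hc⟩ H hH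
      apply det_zero_of_conic c hc0
      intro j
      exact hc _
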